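/- For a finite lattice L, an element w is a narrows if it is comparable with every element of L. If (a,b) is a gluing edge (a ≺ b and both a,b are narrows), then L decomposes as ↓a +̇ [a,b] +̇ ↑b (glued sum), and cd(L) = cd(↓a +̇ ↑b). -/

import Mathlib

/-- A congruence of a lattice: an equivalence relation compatible with `⊔` and `⊓`. -/
structure LatCon (L : Type) [Lattice L] : Type where
  r : L → L → Prop
  refl : ∀ a, r a a
  symm : ∀ {a b}, r a b → r b a
  trans : ∀ {a b c}, r a b → r b c → r a c
  sup : ∀ {a b c d}, r a b → r c d → r (a ⊔ c) (b ⊔ d)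
  inf : ∀ {a b c d}, r a b → r c d → r (a ⊓ c) (b ⊓ d)

/-- The congruence density of a finite lattice `L`. -/
noncomputable def latCd (L : Type) [Lattice L] : ℝ :=
  (Nat.card (LatCon L) : ℝ) / 2 ^ (Nat.card L - 1)

/-- `w` is a narrows of `L` if it is comparable with every element of `L`. -/
def Narrows (L : Type) [Lattice L] (w : L) : Prop := ∀ x : L, w ≤ x ∨ x ≤ w

/-- The glued sum `K +̇ M`, realized as the sublattice
`(K × {⊥}) ∪ ({⊤} × M)` of the direct product `K × M`. -/
def gluedSumSublattice (K M : Type) [Lattice K] [Lattice M] [BoundedOrder K]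
    [BoundedOrder M] : Sublattice (K × M) where
  carrier := {p | p.2 = ⊥ ∨ p.1 = ⊤}
  supClosed' := by
    rintro ⟨a, x⟩ (hx | hx) ⟨b, y⟩ (hy | hy) <;> dsimp only at hx hy ⊢
    · left; show x ⊔ y = ⊥; rw [hx, hy, sup_idem]
    · right; show a ⊔ b = ⊤; rw [hy, sup_top_eq]
    · right; show a ⊔ b = ⊤; rw [hx, top_sup_eq]
    · right; show a ⊔ b = ⊤; rw [hx, top_sup_eq]
  infClosed' := by
    rintro ⟨a, x⟩ (hx | hx) ⟨b, y⟩ (hy | hy) <;> dsimp only at hx hy ⊢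
    · left; show x ⊓ y = ⊥; rw [hx, bot_inf_eq]
    · left; show x ⊓ y = ⊥; rw [hx, bot_inf_eq]
    · left; show x ⊓ y = ⊥; rw [hy, inf_bot_eq]
    · right; show a ⊓ b = ⊤; rw [hx, hy, inf_idem]

/-- The glued sum `K +̇ M` of two bounded lattices, obtained by identifying `⊤` of `K`
with `⊥` of `M`. -/
def GluedSum (K M : Type) [Lattice K] [Lattice M] [BoundedOrder K] [BoundedOrder M] :
    Type := gluedSumSublattice K M

instance (K M : Type) [Lattice K] [Lattice M] [BoundedOrder K] [BoundedOrder M] :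
    Lattice (GluedSum K M) :=
  inferInstanceAs (Lattice (gluedSumSublattice K M))

instance (K M : Type) [Lattice K] [Lattice M] [BoundedOrder K] [BoundedOrder M] :
    BoundedOrder (GluedSum K M) where
  top := ⟨(⊤, ⊤), Or.inr rfl⟩
  le_top _ := ⟨le_top, le_top⟩
  bot := ⟨(⊥, ⊥), Or.inl rfl⟩
  bot_le _ := ⟨bot_le, bot_le⟩

-- ===== auxiliary development =====

theorem LatCon.ext' {C : Type} [Lattice C] {θ₁ θ₂ : LatCon C} (h : θ₁.r = θ₂.r) : θ₁ = θ₂ := by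
  cases θ₁; cases θ₂; cases h; rfl

def latConCongr {C D : Type} [Lattice C] [Lattice D] (e : C ≃o D) : LatCon C ≃ LatCon D where
  toFun θ :=
    { r := fun x y => θ.r (e.symm x) (e.symm y)
      refl := fun x => θ.refl _
      symm := fun h => θ.symm h
      trans := fun h h' => θ.trans h h'
      sup := fun h h' => by have := θ.sup h h'; rwa [← map_sup, ← map_sup] at this
      inf := fun h h' => by have := θ.inf h h'; rwa [← map_inf, ← map_inf] at this }
  invFun θ :=
    { r := fun x y => θ.r (e x) (e y)
      refl := fun x => θ.refl _
      symm := fun h => θ.symm h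
      trans := fun h h' => θ.trans h h'
      sup := fun h h' => by have := θ.sup h h'; rwa [← map_sup, ← map_sup] at this
      inf := fun h h' => by have := θ.inf h h'; rwa [← map_inf, ← map_inf] at this }
  left_inv θ := LatCon.ext' (by
    funext x y
    show θ.r (e.symm (e x)) (e.symm (e y)) = θ.r x y
    rw [e.symm_apply_apply, e.symm_apply_apply])
  right_inv θ := LatCon.ext' (by
    funext x y
    show θ.r (e (e.symm x)) (e (e.symm y)) = θ.r x y
    rw [e.apply_symm_apply, e.apply_symm_apply])

section GS
variable {K M : Type} [Lattice K] [Lattice M] [BoundedOrder K] [BoundedOrder M]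

def gsInl (x : K) : GluedSum K M := ⟨(x, ⊥), Or.inl rfl⟩
def gsInr (y : M) : GluedSum K M := ⟨(⊤, y), Or.inr rfl⟩

lemma gsInl_sup (x y : K) : (gsInl (x ⊔ y) : GluedSum K M) = gsInl x ⊔ gsInl y := by
  apply Subtype.ext; erw [Sublattice.coe_sup]
  exact Prod.ext rfl (sup_idem (⊥ : M)).symm

lemma gsInl_inf (x y : K) : (gsInl (x ⊓ y) : GluedSum K M) = gsInl x ⊓ gsInl y := by
  apply Subtype.ext; erw [Sublattice.coe_inf]
  exact Prod.ext rfl (inf_idem (⊥ : M)).symm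

lemma gsInr_sup (x y : M) : (gsInr (x ⊔ y) : GluedSum K M) = gsInr x ⊔ gsInr y := by
  apply Subtype.ext; erw [Sublattice.coe_sup]
  exact Prod.ext (sup_idem (⊤ : K)).symm rfl

lemma gsInr_inf (x y : M) : (gsInr (x ⊓ y) : GluedSum K M) = gsInr x ⊓ gsInr y := by
  apply Subtype.ext; erw [Sublattice.coe_inf]
  exact Prod.ext (inf_idem (⊤ : K)).symm rfl

lemma gs_glue : (gsInl ⊤ : GluedSum K M) = gsInr ⊥ := rfl

lemma gs_eq_inl {g : GluedSum K M} (h : g.1.2 = ⊥) : g = gsInl g.1.1 :=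
  Subtype.ext (Prod.ext rfl h)

lemma gs_eq_inr {g : GluedSum K M} (h : g.1.1 = ⊤) : g = gsInr g.1.2 :=
  Subtype.ext (Prod.ext h rfl)

lemma gs_inf_glue (g : GluedSum K M) : g ⊓ gsInl ⊤ = gsInl g.1.1 := by
  apply Subtype.ext; erw [Sublattice.coe_inf]
  exact Prod.ext (inf_top_eq _) (inf_bot_eq _)

lemma gs_sup_glue (g : GluedSum K M) : g ⊔ gsInr ⊥ = gsInr g.1.2 := by
  apply Subtype.ext; erw [Sublattice.coe_sup]
  exact Prod.ext (sup_top_eq _) (sup_bot_eq _)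

def latConGluedSum (K M : Type) [Lattice K] [Lattice M] [BoundedOrder K] [BoundedOrder M] :
    LatCon (GluedSum K M) ≃ LatCon K × LatCon M where
  toFun θ :=
    ({ r := fun x y => θ.r (gsInl x) (gsInl y)
       refl := fun x => θ.refl _
       symm := fun h => θ.symm h
       trans := fun h h' => θ.trans h h'
       sup := fun h h' => by have := θ.sup h h'; rwa [← gsInl_sup, ← gsInl_sup] at this
       inf := fun h h' => by have := θ.inf h h'; rwa [← gsInl_inf, ← gsInl_inf] at this },
     { r := fun x y => θ.r (gsInr x) (gsInr y)
       refl := fun x => θ.refl _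
       symm := fun h => θ.symm h
       trans := fun h h' => θ.trans h h'
       sup := fun h h' => by have := θ.sup h h'; rwa [← gsInr_sup, ← gsInr_sup] at this
       inf := fun h h' => by have := θ.inf h h'; rwa [← gsInr_inf, ← gsInr_inf] at this })
  invFun p :=
    { r := fun g h => p.1.r g.1.1 h.1.1 ∧ p.2.r g.1.2 h.1.2
      refl := fun g => ⟨p.1.refl _, p.2.refl _⟩
      symm := fun h => ⟨p.1.symm h.1, p.2.symm h.2⟩
      trans := fun h h' => ⟨p.1.trans h.1 h'.1, p.2.trans h.2 h'.2⟩
      sup := fun h h' => ⟨p.1.sup h.1 h'.1, p.2.sup h.2 h'.2⟩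
      inf := fun h h' => ⟨p.1.inf h.1 h'.1, p.2.inf h.2 h'.2⟩ }
  left_inv θ := by
    apply LatCon.ext'; funext g h; apply propext
    show (θ.r (gsInl g.1.1) (gsInl h.1.1) ∧
        θ.r (gsInr g.1.2) (gsInr h.1.2)) ↔ θ.r g h
    constructor
    · rintro ⟨H1, H2⟩
      rcases g.2 with hg | hg <;> rcases h.2 with hh | hh
      · rw [gs_eq_inl hg, gs_eq_inl hh]; exact H1
      · rw [hh] at H1; rw [hg, ← gs_glue] at H2
        rw [gs_eq_inl hg, gs_eq_inr hh]
        exact θ.trans H1 H2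
      · rw [hg] at H1; rw [hh, ← gs_glue] at H2
        rw [gs_eq_inr hg, gs_eq_inl hh]
        exact θ.trans H2 H1
      · rw [gs_eq_inr hg, gs_eq_inr hh]; exact H2
    · intro H
      constructor
      · rw [← gs_inf_glue g, ← gs_inf_glue h]; exact θ.inf H (θ.refl _)
      · rw [← gs_sup_glue g, ← gs_sup_glue h]; exact θ.sup H (θ.refl _)
  right_inv p := by
    obtain ⟨θK, θM⟩ := p
    simp only [Prod.mk.injEq]
    constructor <;> apply LatCon.ext' <;> funext x y <;> apply propext
    · exact ⟨And.left, fun h => ⟨h, θM.refl _⟩⟩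
    · exact ⟨And.right, fun h => ⟨θK.refl _, h⟩⟩

end GS

section Iso
variable {N : Type} [Lattice N] [BoundedOrder N]

def narrowsFun (w : N) (hw : Narrows N w) (x : N) :
    GluedSum (Set.Iic w) (Set.Ici w) :=
  ⟨(⟨x ⊓ w, inf_le_right⟩, ⟨x ⊔ w, le_sup_right⟩), by
    rcases hw x with h | h
    · right; exact Subtype.ext (inf_eq_right.2 h)
    · left; exact Subtype.ext (sup_eq_right.2 h)⟩

lemma narrowsFun_inj (w : N) (hw : Narrows N w) : Function.Injective (narrowsFun w hw) := by
  intro x y hxy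
  have h1 : x ⊓ w = y ⊓ w := congrArg (fun g => ((g.1.1 : Set.Iic w) : N)) hxy
  have h2 : x ⊔ w = y ⊔ w := congrArg (fun g => ((g.1.2 : Set.Ici w) : N)) hxy
  rcases hw x with hx | hx <;> rcases hw y with hy | hy
  · -- w ≤ x, w ≤ y
    calc x = x ⊔ w := (sup_eq_left.2 hx).symm
    _ = y ⊔ w := h2
    _ = y := sup_eq_left.2 hy
  · -- w ≤ x, y ≤ w
    have hxw : x = w := le_antisymm (by rw [← sup_eq_left.2 hx, h2, sup_eq_right.2 hy]) hx
    have hyw : y = w := le_antisymm hy (by rw [← inf_eq_left.2 hy, ← h1, inf_eq_right.2 hx])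
    rw [hxw, hyw]
  · have hxw : x = w := le_antisymm hx (by rw [← inf_eq_left.2 hx, h1, inf_eq_right.2 hy])
    have hyw : y = w := le_antisymm (by rw [← sup_eq_left.2 hy, ← h2, sup_eq_right.2 hx]) hy
    rw [hxw, hyw]
  · calc x = x ⊓ w := (inf_eq_left.2 hx).symm
    _ = y ⊓ w := h1
    _ = y := inf_eq_left.2 hy

lemma narrowsFun_surj (w : N) (hw : Narrows N w) : Function.Surjective (narrowsFun w hw) := by
  rintro ⟨⟨p, q⟩, hm⟩
  rcases hm with h | h
  · refine ⟨p.1, Subtype.ext (Prod.ext (Subtype.ext ?_) (Subtype.ext ?_))⟩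
    · exact inf_eq_left.2 p.2
    · rw [h]; exact sup_eq_right.2 p.2
  · refine ⟨q.1, Subtype.ext (Prod.ext (Subtype.ext ?_) (Subtype.ext ?_))⟩
    · rw [h]; exact inf_eq_right.2 q.2
    · exact sup_eq_left.2 q.2

lemma narrowsFun_le (w : N) (hw : Narrows N w) {x y : N}
    (h : narrowsFun w hw x ≤ narrowsFun w hw y) : x ≤ y := by
  have h1 : x ⊓ w ≤ y ⊓ w := h.1
  have h2 : x ⊔ w ≤ y ⊔ w := h.2
  rcases hw x with hx | hx
  · -- w ≤ x
    rcases hw y with hy | hy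
    · calc x ≤ x ⊔ w := le_sup_left
      _ ≤ y ⊔ w := h2
      _ = y := sup_eq_left.2 hy
    · have : x ≤ w := by
        calc x ≤ x ⊔ w := le_sup_left
        _ ≤ y ⊔ w := h2
        _ = w := sup_eq_right.2 hy
      calc x ≤ w := this
      _ = x ⊓ w := (inf_eq_right.2 hx).symm
      _ ≤ y ⊓ w := h1
      _ ≤ y := inf_le_left
  · calc x = x ⊓ w := (inf_eq_left.2 hx).symm
    _ ≤ y ⊓ w := h1
    _ ≤ y := inf_le_left

noncomputable def narrowsOrderIso (w : N) (hw : Narrows N w) :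
    N ≃o GluedSum (Set.Iic w) (Set.Ici w) where
  toEquiv := Equiv.ofBijective (narrowsFun w hw) ⟨narrowsFun_inj w hw, narrowsFun_surj w hw⟩
  map_rel_iff' := by
    intro x y
    constructor
    · exact narrowsFun_le w hw
    · intro h
      exact ⟨Subtype.mk_le_mk.2 (inf_le_inf_right w h), Subtype.mk_le_mk.2 (sup_le_sup_right h w)⟩

end Iso

section Congr
variable {K M K' M' : Type} [Lattice K] [Lattice M] [Lattice K'] [Lattice M']
  [BoundedOrder K] [BoundedOrder M] [BoundedOrder K'] [BoundedOrder M']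

def gluedSumCongr (e : K ≃o K') (f : M ≃o M') : GluedSum K M ≃o GluedSum K' M' where
  toEquiv :=
    { toFun := fun g => ⟨(e g.1.1, f g.1.2), by
        rcases g.2 with h | h
        · left; show f g.1.2 = ⊥; rw [h]; exact map_bot f
        · right; show e g.1.1 = ⊤; rw [h]; exact map_top e⟩
      invFun := fun g => ⟨(e.symm g.1.1, f.symm g.1.2), by
        rcases g.2 with h | h
        · left; show f.symm g.1.2 = ⊥; rw [h]; exact map_bot f.symm
        · right; show e.symm g.1.1 = ⊤; rw [h]; exact map_top e.symm⟩
      left_inv := fun g =>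
        Subtype.ext (Prod.ext (e.symm_apply_apply _) (f.symm_apply_apply _))
      right_inv := fun g =>
        Subtype.ext (Prod.ext (e.apply_symm_apply _) (f.apply_symm_apply _)) }
  map_rel_iff' := by
    intro g h
    show (e g.1.1 ≤ e h.1.1 ∧ f g.1.2 ≤ f h.1.2) ↔ _
    exact and_congr e.le_iff_le f.le_iff_le

end Congr

section Nested
variable {N : Type} [Lattice N] (a b : N) (hle : a ≤ b)

def iicIccIso : Set.Iic (⟨b, hle⟩ : Set.Ici a) ≃o Set.Icc a b where
  toEquiv :=
    { toFun := fun x => ⟨x.1.1, x.1.2, x.2⟩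
      invFun := fun y => ⟨⟨y.1, y.2.1⟩, y.2.2⟩
      left_inv := fun x => rfl
      right_inv := fun y => rfl }
  map_rel_iff' := Iff.rfl

def iciIciIso : Set.Ici (⟨b, hle⟩ : Set.Ici a) ≃o Set.Ici b where
  toEquiv :=
    { toFun := fun x => ⟨x.1.1, x.2⟩
      invFun := fun y => ⟨⟨y.1, le_trans hle y.2⟩, y.2⟩
      left_inv := fun x => rfl
      right_inv := fun y => rfl }
  map_rel_iff' := Iff.rfl

end Nested

section TwoChain
variable {C : Type} [Lattice C]

def twoChainLatCon (u v : C) (huv : u ≠ v) (hcover : ∀ x : C, x = u ∨ x = v) :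
    LatCon C ≃ Prop where
  toFun θ := θ.r u v
  invFun t :=
    { r := fun x y => x = y ∨ t
      refl := fun _ => Or.inl rfl
      symm := fun h => h.imp Eq.symm id
      trans := fun h h' => by
        rcases h with rfl | h
        · exact h'
        · exact Or.inr h
      sup := fun h h' => by
        rcases h with rfl | h
        · rcases h' with rfl | h'
          · exact Or.inl rfl
          · exact Or.inr h'
        · exact Or.inr h
      inf := fun h h' => by
        rcases h with rfl | h
        · rcases h' with rfl | h'
          · exact Or.inl rfl
          · exact Or.inr h'
        · exact Or.inr h }
  left_inv θ := by
    apply LatCon.ext'; funext x y; apply propext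
    show x = y ∨ θ.r u v ↔ θ.r x y
    constructor
    · rintro (rfl | h)
      · exact θ.refl x
      · rcases hcover x with rfl | rfl <;> rcases hcover y with rfl | rfl
        · exact θ.refl _
        · exact h
        · exact θ.symm h
        · exact θ.refl _
    · intro h
      rcases hcover x with rfl | rfl <;> rcases hcover y with rfl | rfl
      · exact Or.inl rfl
      · exact Or.inr h
      · exact Or.inr (θ.symm h)
      · exact Or.inl rfl
  right_inv t := by
    show (u = v ∨ t) = t
    exact propext (or_iff_right huv)

end TwoChain

section Card
variable (K M : Type) [Lattice K] [Lattice M] [BoundedOrder K] [BoundedOrder M]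

instance gluedSumFinite [Finite K] [Finite M] : Finite (GluedSum K M) :=
  Finite.of_injective (fun g : GluedSum K M => g.1) (fun _ _ h => Subtype.ext h)

open Classical in
noncomputable def gluedCardEquiv : (GluedSum K M) ⊕ Unit ≃ K ⊕ M where
  toFun s :=
    match s with
    | Sum.inl g => if h : g.1.2 = ⊥ then Sum.inl g.1.1 else Sum.inr g.1.2
    | Sum.inr _ => Sum.inr ⊥
  invFun s :=
    match s with
    | Sum.inl x => Sum.inl (gsInl x)
    | Sum.inr y => if y = ⊥ then Sum.inr () else Sum.inl (gsInr y)
  left_inv := by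
    rintro (g | u)
    · by_cases h : g.1.2 = ⊥
      · simp only [dif_pos h]
        exact congrArg Sum.inl (gs_eq_inl h).symm
      · simp only [dif_neg h, if_neg h]
        exact congrArg Sum.inl (gs_eq_inr (g.2.resolve_left h)).symm
    · simp
  right_inv := by
    rintro (x | y)
    · simp only []
      have : ((gsInl x : GluedSum K M).1.2 : M) = ⊥ := rfl
      rw [dif_pos this]; rfl
    · by_cases h : y = ⊥
      · subst h; simp
      · simp only [if_neg h]
        have : ((gsInr y : GluedSum K M).1.2 : M) = y := rfl
        rw [dif_neg (this ▸ h)]; rfl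

lemma card_gluedSum [Finite K] [Finite M] :
    Nat.card (GluedSum K M) + 1 = Nat.card K + Nat.card M := by
  have h1 : Nat.card ((GluedSum K M) ⊕ Unit) = Nat.card (GluedSum K M) + 1 := by
    rw [Nat.card_sum]; simp
  rw [← h1, Nat.card_congr (gluedCardEquiv K M), Nat.card_sum]

end Card

/-- If `(a, b)` is a gluing edge of a finite lattice `L` (`a ⋖ b` and both `a` and `b` are
narrows), then `L` decomposes as the glued sum `↓a +̇ [a,b] +̇ ↑b`, and
`cd L = cd (↓a +̇ ↑b)`. -/
theorem gluing_edge_decomposition (L : Type) [Lattice L] [Finite L] [BoundedOrder L]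
    (a b : L) [Fact (a ≤ b)] (hab : a ⋖ b) (ha : Narrows L a) (hb : Narrows L b) :
    Nonempty (L ≃o GluedSum (Set.Iic a) (GluedSum (Set.Icc a b) (Set.Ici b))) ∧
      latCd L = latCd (GluedSum (Set.Iic a) (Set.Ici b)) := by
  have hle : a ≤ b := hab.le
  have hne : a ≠ b := hab.ne
  -- narrows of Set.Ici a at ⟨b, hle⟩
  have hbN : Narrows (Set.Ici a) (⟨b, hle⟩ : Set.Ici a) := by
    intro x
    rcases hb x.1 with h | h
    · exact Or.inl h
    · exact Or.inr h
  -- the iso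
  let e1 : L ≃o GluedSum (Set.Iic a) (Set.Ici a) := narrowsOrderIso a ha
  let e2 : Set.Ici a ≃o GluedSum (Set.Iic (⟨b, hle⟩ : Set.Ici a)) (Set.Ici (⟨b, hle⟩ : Set.Ici a)) :=
    narrowsOrderIso _ hbN
  let e5 : GluedSum (Set.Iic (⟨b, hle⟩ : Set.Ici a)) (Set.Ici (⟨b, hle⟩ : Set.Ici a)) ≃o
      GluedSum (Set.Icc a b) (Set.Ici b) := gluedSumCongr (iicIccIso a b hle) (iciIciIso a b hle)
  let iso : L ≃o GluedSum (Set.Iic a) (GluedSum (Set.Icc a b) (Set.Ici b)) :=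
    e1.trans (gluedSumCongr (OrderIso.refl _) (e2.trans e5))
  refine ⟨⟨iso⟩, ?_⟩
  -- two-element interval
  have hcover : ∀ x : Set.Icc a b, x = ⟨a, le_rfl, hle⟩ ∨ x = ⟨b, hle, le_rfl⟩ := by
    intro x
    rcases (hab.eq_or_eq x.2.1 x.2.2 : x.1 = a ∨ x.1 = b) with h | h
    · exact Or.inl (Subtype.ext h)
    · exact Or.inr (Subtype.ext h)
  have hneS : (⟨a, le_rfl, hle⟩ : Set.Icc a b) ≠ ⟨b, hle, le_rfl⟩ := by
    intro h; exact hne (congrArg Subtype.val h)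
  have hIccCon : Nat.card (LatCon (Set.Icc a b)) = 2 := by
    rw [Nat.card_congr (twoChainLatCon _ _ hneS hcover)]
    simp [Nat.card_eq_fintype_card]
  have hIcc2 : Nat.card (Set.Icc a b) = 2 := by
    rw [Nat.card_eq_two_iff]
    refine ⟨⟨a, le_rfl, hle⟩, ⟨b, hle, le_rfl⟩, hneS, ?_⟩
    rw [Set.eq_univ_iff_forall]
    intro z
    rcases hcover z with h | h
    · exact Or.inl h
    · exact Or.inr h
  -- cardinalities
  have hcT : Nat.card (GluedSum (Set.Icc a b) (Set.Ici b)) + 1 =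
      2 + Nat.card (Set.Ici b) := by
    rw [card_gluedSum, hIcc2]
  have hcL : Nat.card L + 1 =
      Nat.card (Set.Iic a) + Nat.card (GluedSum (Set.Icc a b) (Set.Ici b)) := by
    rw [Nat.card_congr iso.toEquiv, card_gluedSum]
  have hcG : Nat.card (GluedSum (Set.Iic a) (Set.Ici b)) + 1 =
      Nat.card (Set.Iic a) + Nat.card (Set.Ici b) := by
    rw [card_gluedSum]
  have hGpos : 0 < Nat.card (GluedSum (Set.Iic a) (Set.Ici b)) := by
    have : Nonempty (GluedSum (Set.Iic a) (Set.Ici b)) := ⟨⊥⟩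
    exact Nat.card_pos
  have hcLG : Nat.card L - 1 = Nat.card (GluedSum (Set.Iic a) (Set.Ici b)) := by omega
  -- congruence counts
  have hnL : Nat.card (LatCon L) =
      Nat.card (LatCon (Set.Iic a)) * (2 * Nat.card (LatCon (Set.Ici b))) := by
    rw [Nat.card_congr ((latConCongr iso).trans (latConGluedSum _ _)), Nat.card_prod,
      Nat.card_congr (latConGluedSum (Set.Icc a b) (Set.Ici b)), Nat.card_prod, hIccCon]
  have hnG : Nat.card (LatCon (GluedSum (Set.Iic a) (Set.Ici b))) =
      Nat.card (LatCon (Set.Iic a)) * Nat.card (LatCon (Set.Ici b)) := by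
    rw [Nat.card_congr (latConGluedSum _ _), Nat.card_prod]
  -- final real computation
  obtain ⟨n, hn⟩ : ∃ n, Nat.card (GluedSum (Set.Iic a) (Set.Ici b)) = n + 1 :=
    ⟨Nat.card (GluedSum (Set.Iic a) (Set.Ici b)) - 1, (Nat.succ_pred_eq_of_pos hGpos).symm⟩
  unfold latCd
  rw [hnL, hnG, hcLG, hn, Nat.add_sub_cancel, pow_succ,
    div_eq_div_iff (by positivity) (by positivity)]
  push_cast
  ring
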